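/- For every n ≥ 0, the identity (x + y)·Λ_n(x,y) = L_n(x,y) + W_n(x,y) holds in ℚ[x,y], where Λ_n(x,y) = Σ_{k} Λ(n,k)·x^k·y^{n−k} (with Λ_0(x,y) = 1), L_n(x,y) is the bivariate left peak polynomial, and W_n(x,y) is the bivariate exterior peak polynomial. -/

import Mathlib

open MvPolynomial

/-- The `i`-th entry (1-indexed) of the permutation `σ` of `[n]`, with the
convention that positions `0` and `> n` carry the entry `0`. -/
def permEntry (n : ℕ) (σ : Equiv.Perm (Fin n)) (i : ℕ) : ℕ :=
  if h : 1 ≤ i ∧ i ≤ n then ((σ ⟨i - 1, by omega⟩ : Fin n) : ℕ) + 1 else 0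

/-- The number of left peaks of `σ`: indices `1 ≤ i ≤ n-1` with
`σ_{i-1} < σ_i > σ_{i+1}`, convention `σ₀ = 0`. -/
def leftPeakCount (n : ℕ) (σ : Equiv.Perm (Fin n)) : ℕ :=
  ((Finset.Icc 1 (n - 1)).filter fun i =>
    permEntry n σ (i - 1) < permEntry n σ i ∧ permEntry n σ (i + 1) < permEntry n σ i).card

/-- The number of exterior peaks of `σ`: indices `1 ≤ i ≤ n` with
`σ_{i-1} < σ_i > σ_{i+1}`, conventions `σ₀ = σ_{n+1} = 0`. -/
def extPeakCount (n : ℕ) (σ : Equiv.Perm (Fin n)) : ℕ :=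
  ((Finset.Icc 1 n).filter fun i =>
    permEntry n σ (i - 1) < permEntry n σ i ∧ permEntry n σ (i + 1) < permEntry n σ i).card

/-- The number of interior peaks of `σ`: indices `2 ≤ i ≤ n-1` with
`σ_{i-1} < σ_i > σ_{i+1}`. -/
def intPeakCount (n : ℕ) (σ : Equiv.Perm (Fin n)) : ℕ :=
  ((Finset.Icc 2 (n - 1)).filter fun i =>
    permEntry n σ (i - 1) < permEntry n σ i ∧ permEntry n σ (i + 1) < permEntry n σ i).card

/-- The number of up-down runs of `σ`: maximal monotone segments of the
extended sequence `0, σ₁, …, σₙ`, i.e. one more than the number of direction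
changes of that sequence (and `0` for `n = 0`). -/
def udRunCount (n : ℕ) (σ : Equiv.Perm (Fin n)) : ℕ :=
  if n = 0 then 0 else
    1 + ((Finset.Icc 1 (n - 1)).filter fun i =>
      (permEntry n σ (i - 1) < permEntry n σ i ∧ permEntry n σ (i + 1) < permEntry n σ i) ∨
      (permEntry n σ i < permEntry n σ (i - 1) ∧ permEntry n σ i < permEntry n σ (i + 1))).card

/-- The number of alternating runs of `σ`: maximal monotone segments of
`σ₁, …, σₙ`, i.e. one more than the number of direction changes (and `0` for `n = 0`). -/
def altRunCount (n : ℕ) (σ : Equiv.Perm (Fin n)) : ℕ :=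
  if n = 0 then 0 else
    1 + ((Finset.Icc 2 (n - 1)).filter fun i =>
      (permEntry n σ (i - 1) < permEntry n σ i ∧ permEntry n σ (i + 1) < permEntry n σ i) ∨
      (permEntry n σ i < permEntry n σ (i - 1) ∧ permEntry n σ i < permEntry n σ (i + 1))).card

/-- `L n k` : the number of permutations of `[n]` with exactly `k` left peaks. -/
def leftPeakNum (n k : ℕ) : ℕ :=
  (Finset.univ.filter fun σ : Equiv.Perm (Fin n) => leftPeakCount n σ = k).card

/-- `W n k` : the number of permutations of `[n]` with exactly `k` exterior peaks. -/
def extPeakNum (n k : ℕ) : ℕ :=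
  (Finset.univ.filter fun σ : Equiv.Perm (Fin n) => extPeakCount n σ = k).card

/-- `M n k` : the number of permutations of `[n]` with exactly `k` interior peaks. -/
def intPeakNum (n k : ℕ) : ℕ :=
  (Finset.univ.filter fun σ : Equiv.Perm (Fin n) => intPeakCount n σ = k).card

/-- `Λ n k` : the number of permutations of `[n]` with exactly `k` up-down runs. -/
def udRunNum (n k : ℕ) : ℕ :=
  (Finset.univ.filter fun σ : Equiv.Perm (Fin n) => udRunCount n σ = k).card

/-- `R n k` : the number of permutations of `[n]` with exactly `k` alternating runs. -/
def altRunNum (n k : ℕ) : ℕ :=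
  (Finset.univ.filter fun σ : Equiv.Perm (Fin n) => altRunCount n σ = k).card

/-- The bivariate up-down run polynomial `Λ_n(x,y) = Σ_k Λ(n,k)·x^k·y^{n−k}`. -/
noncomputable def UDb (n : ℕ) : MvPolynomial (Fin 2) ℚ :=
  ∑ k ∈ Finset.range (n + 1),
    (udRunNum n k : MvPolynomial (Fin 2) ℚ) * X 0 ^ k * X 1 ^ (n - k)

/-- The bivariate left peak polynomial
`L_n(x,y) = Σ_{k=0}^{⌊n/2⌋} L(n,k)·x^{2k+1}·y^{n−2k}`. -/
noncomputable def Lb (n : ℕ) : MvPolynomial (Fin 2) ℚ :=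
  ∑ k ∈ Finset.range (n / 2 + 1),
    (leftPeakNum n k : MvPolynomial (Fin 2) ℚ) * X 0 ^ (2 * k + 1) * X 1 ^ (n - 2 * k)

/-- The bivariate exterior peak polynomial
`W_n(x,y) = Σ_{k=1}^{⌊(n+1)/2⌋} W(n,k)·x^{2k}·y^{n−2k+1}`, with `W_0(x,y) = y`. -/
noncomputable def Wb (n : ℕ) : MvPolynomial (Fin 2) ℚ :=
  if n = 0 then X 1 else
    ∑ k ∈ Finset.Icc 1 ((n + 1) / 2),
      (extPeakNum n k : MvPolynomial (Fin 2) ℚ) * X 0 ^ (2 * k) * X 1 ^ (n + 1 - 2 * k)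


lemma pe_pos (n : ℕ) (σ : Equiv.Perm (Fin n)) (i : ℕ) (h1 : 1 ≤ i) (h2 : i ≤ n) :
    1 ≤ permEntry n σ i := by
  rw [permEntry, dif_pos ⟨h1, h2⟩]; omega

lemma pe_zero (n : ℕ) (σ : Equiv.Perm (Fin n)) (i : ℕ) (h : i = 0 ∨ n < i) :
    permEntry n σ i = 0 := by
  rw [permEntry, dif_neg (by omega)]

lemma pe_ne (n : ℕ) (σ : Equiv.Perm (Fin n)) (i j : ℕ) (h1 : 1 ≤ i) (h2 : i ≤ n)
    (h3 : 1 ≤ j) (h4 : j ≤ n) (h5 : i ≠ j) : permEntry n σ i ≠ permEntry n σ j := by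
  rw [permEntry, permEntry, dif_pos ⟨h1, h2⟩, dif_pos ⟨h3, h4⟩]
  intro h
  have : σ ⟨i-1, by omega⟩ = σ ⟨j-1, by omega⟩ := Fin.ext (by omega)
  have := σ.injective this
  simp [Fin.mk.injEq] at this
  omega

lemma key_pv (a : ℕ → ℕ) (h0 : a 0 < a 1) :
    ∀ m, (∀ i, 1 ≤ i → i ≤ m → a i ≠ a (i+1)) →
    ((Finset.Icc 1 m).filter fun i => a (i-1) < a i ∧ a (i+1) < a i).card
    = ((Finset.Icc 1 m).filter fun i => a i < a (i-1) ∧ a i < a (i+1)).card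
      + (if a (m+1) < a m then 1 else 0) := by
  intro m
  induction m with
  | zero =>
    intro _
    rw [Finset.Icc_eq_empty (by omega)]
    simp only [show (0:ℕ)+1 = 1 from rfl]
    rw [if_neg (by omega)]
    simp
  | succ m ih =>
    intro hne
    have hP : a m ≠ a (m+1) := by
      rcases Nat.eq_zero_or_pos m with h | h
      · subst h; exact h0.ne
      · exact hne m h (by omega)
    have hQ : a (m+1) ≠ a (m+2) := hne (m+1) (by omega) le_rfl
    have ih' := ih (fun i h1 h2 => hne i h1 (by omega))
    have hicc : Finset.Icc 1 (m+1) = insert (m+1) (Finset.Icc 1 m) := by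
      ext x; simp [Finset.mem_Icc]; omega
    have hnm : (m+1) ∉ Finset.Icc 1 m := by simp
    rw [hicc, Finset.filter_insert, Finset.filter_insert]
    simp only [show m+1+1 = m+2 from rfl, show m+1-1 = m from rfl]
    rcases lt_or_gt_of_ne hP with h1 | h1 <;> rcases lt_or_gt_of_ne hQ with h2 | h2
    · rw [if_neg (by omega), if_neg (by omega), if_neg (by omega)]
      rw [if_neg (by omega)] at ih'
      omega
    · rw [if_pos (by omega), if_neg (by omega), if_pos (by omega)]
      rw [if_neg (by omega)] at ih'
      rw [Finset.card_insert_of_notMem (by simp)]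
      omega
    · rw [if_neg (by omega), if_pos (by omega), if_neg (by omega)]
      rw [if_pos (by omega)] at ih'
      rw [Finset.card_insert_of_notMem (by simp)]
      omega
    · rw [if_neg (by omega), if_neg (by omega), if_pos (by omega)]
      rw [if_pos (by omega)] at ih'
      omega

lemma counts (n : ℕ) (hn : 1 ≤ n) (σ : Equiv.Perm (Fin n)) :
    udRunCount n σ = leftPeakCount n σ + extPeakCount n σ ∧
    (extPeakCount n σ = leftPeakCount n σ ∨ extPeakCount n σ = leftPeakCount n σ + 1) ∧
    udRunCount n σ ≤ n ∧ 1 ≤ extPeakCount n σ := by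
  have h0 : permEntry n σ 0 < permEntry n σ 1 := by
    rw [pe_zero n σ 0 (Or.inl rfl)]
    exact pe_pos n σ 1 le_rfl hn
  have hne : ∀ i, 1 ≤ i → i ≤ n - 1 → permEntry n σ i ≠ permEntry n σ (i+1) := fun i hi1 hi2 =>
    pe_ne n σ i (i+1) hi1 (by omega) (by omega) (by omega) (by omega)
  have hkey := key_pv (permEntry n σ) h0 (n-1) hne
  have hsucc : n - 1 + 1 = n := by omega
  rw [hsucc] at hkey
  have hanpos : 1 ≤ permEntry n σ n := pe_pos n σ n hn le_rfl
  have han1 : permEntry n σ (n+1) = 0 := pe_zero n σ (n+1) (Or.inr (by omega))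
  have hPn : permEntry n σ (n-1) ≠ permEntry n σ n := by
    rcases Nat.eq_or_lt_of_le hn with h | h
    · have h1 : n - 1 = 0 := by omega
      rw [h1, pe_zero n σ 0 (Or.inl rfl)]
      omega
    · exact pe_ne n σ (n-1) n (by omega) (by omega) (by omega) le_rfl (by omega)
  have hext : extPeakCount n σ = leftPeakCount n σ +
      (if permEntry n σ (n-1) < permEntry n σ n then 1 else 0) := by
    have hicc : Finset.Icc 1 n = insert n (Finset.Icc 1 (n-1)) := by
      ext x; simp [Finset.mem_Icc]; omega
    rw [extPeakCount, leftPeakCount, hicc, Finset.filter_insert]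
    by_cases hc : permEntry n σ (n-1) < permEntry n σ n
    · rw [if_pos ⟨hc, by omega⟩, if_pos hc,
        Finset.card_insert_of_notMem (by simp [Finset.mem_Icc]; omega)]
    · rw [if_neg (fun hh => hc hh.1), if_neg hc, Nat.add_zero]
  have hud : udRunCount n σ = 1 + leftPeakCount n σ +
      ((Finset.Icc 1 (n-1)).filter fun i =>
        permEntry n σ i < permEntry n σ (i-1) ∧ permEntry n σ i < permEntry n σ (i+1)).card := by
    rw [udRunCount, if_neg (by omega), leftPeakCount, Finset.filter_or,
      Finset.card_union_of_disjoint (Finset.disjoint_left.2 (by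
        intro x hx hx'
        simp [Finset.mem_filter] at hx hx'
        omega))]
    omega
  have hudle : udRunCount n σ ≤ n := by
    rw [udRunCount, if_neg (by omega)]
    have h := Finset.card_filter_le (Finset.Icc 1 (n-1)) (fun i =>
      (permEntry n σ (i - 1) < permEntry n σ i ∧ permEntry n σ (i + 1) < permEntry n σ i) ∨
      (permEntry n σ i < permEntry n σ (i - 1) ∧ permEntry n σ i < permEntry n σ (i + 1)))
    rw [Nat.card_Icc] at h
    omega
  have hlpk : leftPeakCount n σ =
      ((Finset.Icc 1 (n-1)).filter fun i =>
        permEntry n σ (i-1) < permEntry n σ i ∧ permEntry n σ (i+1) < permEntry n σ i).card := rfl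
  rcases lt_or_gt_of_ne hPn with h | h
  · rw [if_pos h] at hext
    rw [if_neg (by omega)] at hkey
    refine ⟨by omega, Or.inr (by omega), hudle, by omega⟩
  · rw [if_neg (by omega)] at hext
    rw [if_pos (by omega)] at hkey
    refine ⟨by omega, Or.inl (by omega), hudle, by omega⟩

lemma sum_count {n : ℕ} (g : Equiv.Perm (Fin n) → ℕ) (t : Finset ℕ)
    (hg : ∀ σ, g σ ∈ t) (f : ℕ → MvPolynomial (Fin 2) ℚ) :
    ∑ k ∈ t, ((Finset.univ.filter fun σ : Equiv.Perm (Fin n) => g σ = k).card :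
        MvPolynomial (Fin 2) ℚ) * f k
    = ∑ σ : Equiv.Perm (Fin n), f (g σ) := by
  rw [← Finset.sum_fiberwise_of_maps_to (fun σ _ => hg σ) (fun σ => f (g σ))]
  refine Finset.sum_congr rfl fun k _ => ?_
  rw [Finset.sum_congr rfl (fun σ hσ => by rw [(Finset.mem_filter.1 hσ).2]),
    Finset.sum_const, nsmul_eq_mul]

lemma per_sigma (n u l e : ℕ) (h1 : u = l + e) (h2 : e = l ∨ e = l + 1)
    (h3 : u ≤ n) (x y : MvPolynomial (Fin 2) ℚ) :
    (x + y) * (x ^ u * y ^ (n - u)) =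
      x ^ (2*l+1) * y ^ (n - 2*l) + x ^ (2*e) * y ^ (n + 1 - 2*e) := by
  rcases h2 with h2 | h2
  · rw [show 2*l+1 = u+1 by omega, show n - 2*l = n - u by omega,
      show 2*e = u by omega, show n + 1 - u = (n-u)+1 by omega]
    ring
  · rw [show 2*l+1 = u by omega, show n - 2*l = (n-u)+1 by omega,
      show 2*e = u+1 by omega, show n + 1 - (u+1) = n-u by omega]
    ring

/-- `(x + y)·Λ_n(x,y) = L_n(x,y) + W_n(x,y)`. -/
theorem stmt_16 (n : ℕ) : (X 0 + X 1) * UDb n = Lb n + Wb n := by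
  rcases Nat.eq_zero_or_pos n with hn | hn
  · subst hn
    have hUD : UDb 0 = 1 := by
      rw [UDb]
      simp [udRunNum, udRunCount, Finset.filter_true_of_mem]
    have hL : Lb 0 = X 0 := by
      rw [Lb]
      have : leftPeakCount 0 = fun _ => 0 := by
        funext σ
        rw [leftPeakCount, Finset.Icc_eq_empty (by omega)]
        rfl
      simp [leftPeakNum, this, Finset.filter_true_of_mem]
    rw [hUD, hL, Wb, if_pos rfl, mul_one]
  · have hcts := counts n hn
    have hUD : UDb n = ∑ σ : Equiv.Perm (Fin n),
        X 0 ^ udRunCount n σ * (X 1 : MvPolynomial (Fin 2) ℚ) ^ (n - udRunCount n σ) := by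
      rw [UDb]
      simp only [udRunNum, mul_assoc]
      exact sum_count _ _ (fun σ => Finset.mem_range.2 (by have := (hcts σ).2.2.1; omega))
        (fun k => X 0 ^ k * X 1 ^ (n - k))
    have hL : Lb n = ∑ σ : Equiv.Perm (Fin n),
        X 0 ^ (2 * leftPeakCount n σ + 1) *
          (X 1 : MvPolynomial (Fin 2) ℚ) ^ (n - 2 * leftPeakCount n σ) := by
      rw [Lb]
      simp only [leftPeakNum, mul_assoc]
      exact sum_count _ _ (fun σ => Finset.mem_range.2 (by
        obtain ⟨h1, h2, h3, h4⟩ := hcts σ; omega))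
        (fun k => X 0 ^ (2*k+1) * X 1 ^ (n - 2*k))
    have hW : Wb n = ∑ σ : Equiv.Perm (Fin n),
        X 0 ^ (2 * extPeakCount n σ) *
          (X 1 : MvPolynomial (Fin 2) ℚ) ^ (n + 1 - 2 * extPeakCount n σ) := by
      rw [Wb, if_neg (by omega)]
      simp only [extPeakNum, mul_assoc]
      exact sum_count _ _ (fun σ => Finset.mem_Icc.2 (by
        obtain ⟨h1, h2, h3, h4⟩ := hcts σ
        constructor <;> omega))
        (fun k => X 0 ^ (2*k) * X 1 ^ (n + 1 - 2*k))
    rw [hUD, hL, hW, Finset.mul_sum, ← Finset.sum_add_distrib]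
    refine Finset.sum_congr rfl fun σ _ => ?_
    obtain ⟨h1, h2, h3, h4⟩ := hcts σ
    exact per_sigma n _ _ _ h1 h2 h3 _ _
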